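/- Let p be a positive odd integer and define h_φ(t) = (1/p²) · sin²(pt/2)/sin²(t/2) (extended by continuity where sin(t/2) = 0). Then for every t ∈ ℝ, Σ_{k=0}^{p-1} h_φ(t + 2kπ/p) = 1; equivalently, for every t with sin((t+2kπ/p)/2) ≠ 0 for all k ∈ {0,…,p-1}, (1/p²) Σ_{k=0}^{p-1} sin²(pt/2)/sin²((t + 2kπ/p)/2) = 1. -/

import Mathlib

/- STATEMENT 17: for p a positive odd integer and
`h_φ(t) = (1/p²) sin²(pt/2)/sin²(t/2)` (extended by continuity, with value 1, at the
points where sin(t/2) = 0), one has `∑_{k=0}^{p-1} h_φ(t + 2kπ/p) = 1` for all t;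
equivalently, whenever sin((t+2kπ/p)/2) ≠ 0 for all k < p,
`(1/p²) ∑_{k<p} sin²(pt/2)/sin²((t+2kπ/p)/2) = 1`. -/

noncomputable section

/-- `h_φ(t) = (1/p²) sin²(pt/2)/sin²(t/2)`, extended by continuity (value 1, valid for
odd p) where `sin(t/2) = 0`. -/
def hphi (p : ℕ) (t : ℝ) : ℝ :=
  if Real.sin (t / 2) = 0 then 1
  else Real.sin (p * t / 2) ^ 2 / ((p : ℝ) ^ 2 * Real.sin (t / 2) ^ 2)

open Complex Finset

lemma ratio_sq (p : ℕ) (hp0 : 0 < p) (z : ℂ) (hz : Complex.sin z ≠ 0) :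
    (Complex.sin (p * z) / Complex.sin z) ^ 2
      = ∑ j ∈ range p, ∑ l ∈ range p,
          Complex.exp (2 * z * I) ^ ((j : ℤ) + l - p + 1) := by
  obtain ⟨q, rfl⟩ : ∃ q, p = q + 1 := ⟨p - 1, by omega⟩
  set p := q + 1 with hp_def
  set a : ℂ := Complex.exp (z * I) with ha_def
  have ha : a ≠ 0 := Complex.exp_ne_zero _
  have hsz : Complex.sin z = (a⁻¹ - a) * I / 2 := by
    rw [Complex.sin, ha_def, ← Complex.exp_neg]
    ring_nf
  have hd : a⁻¹ - a ≠ 0 := by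
    intro h
    apply hz
    rw [hsz, h]; ring
  have ha2 : a ^ 2 ≠ 1 := by
    intro h
    apply hd
    rw [sub_eq_zero]
    field_simp
    linear_combination -h
  have e1 : Complex.exp ((p : ℂ) * z * I) = a ^ p := by
    rw [ha_def, ← Complex.exp_nat_mul]; ring_nf
  have hspz : Complex.sin ((p : ℂ) * z) = ((a ^ p)⁻¹ - a ^ p) * I / 2 := by
    rw [Complex.sin, neg_mul, Complex.exp_neg, e1]
  have hw : Complex.exp (2 * z * I) = a ^ 2 := by
    rw [ha_def, ← Complex.exp_nat_mul]; push_cast; ring_nf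
  have hrhs : ∑ j ∈ range p, ∑ l ∈ range p,
      Complex.exp (2 * z * I) ^ ((j : ℤ) + l - p + 1)
      = (∑ j ∈ range p, (a ^ 2) ^ j) ^ 2 * ((a ^ 2) ^ q)⁻¹ := by
    rw [sq (∑ j ∈ range p, (a ^ 2) ^ j), Finset.sum_mul_sum, Finset.sum_mul]
    refine Finset.sum_congr rfl fun j hj => ?_
    rw [Finset.sum_mul]
    refine Finset.sum_congr rfl fun l hl => ?_
    rw [hw]
    have ha2ne : (a : ℂ) ^ 2 ≠ 0 := pow_ne_zero _ ha
    have he : ((j : ℤ) + l - p + 1) = ((j + l : ℕ) : ℤ) + (-(q : ℤ)) := by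
      rw [hp_def]; push_cast; ring
    rw [he, zpow_add₀ ha2ne, zpow_natCast, zpow_neg, zpow_natCast, pow_add]
  rw [hrhs, geom_sum_eq ha2 p]
  have hcan : ∀ X Y : ℂ, Y ≠ 0 → (X * I / 2) / (Y * I / 2) = X / Y := by
    intro X Y hY
    rw [div_div_div_eq, div_eq_div_iff (by simp [hY, I_ne_zero]) hY]
    ring
  have hr : Complex.sin ((p : ℂ) * z) / Complex.sin z = ((a ^ p)⁻¹ - a ^ p) / (a⁻¹ - a) := by
    rw [hsz, hspz, hcan _ _ hd]
  have h2 : a ^ 2 - 1 ≠ 0 := sub_ne_zero.mpr ha2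
  rw [hr, div_pow, div_pow, ← div_eq_mul_inv, div_div,
    div_eq_div_iff (pow_ne_zero _ hd) (mul_ne_zero (pow_ne_zero _ h2)
      (pow_ne_zero _ (pow_ne_zero _ ha)))]
  field_simp
  ring

lemma key (p : ℕ) (hp0 : 0 < p) (x : ℝ)
    (hx : ∀ k ∈ range p, Real.sin (x + k * Real.pi / p) ≠ 0) :
    ∑ k ∈ range p,
      (Real.sin (p * (x + k * Real.pi / p)) / Real.sin (x + k * Real.pi / p)) ^ 2
      = (p : ℝ) ^ 2 := by
  have hpR : (p : ℂ) ≠ 0 := Nat.cast_ne_zero.mpr hp0.ne'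
  have hπ : (2 * (Real.pi : ℂ) * I) ≠ 0 := by
    simp [Real.pi_ne_zero, I_ne_zero]
  set ζ : ℂ := Complex.exp (2 * (Real.pi : ℂ) * I / p) with hζ_def
  -- complex version
  have hmain : ∑ k ∈ range p,
      ((Complex.sin ((p : ℂ) * ((x : ℂ) + (k : ℂ) * (Real.pi : ℂ) / p)) /
        Complex.sin ((x : ℂ) + (k : ℂ) * (Real.pi : ℂ) / p)) ^ 2) = (p : ℂ) ^ 2 := by
    have hstep : ∀ k ∈ range p,
        (Complex.sin ((p : ℂ) * ((x : ℂ) + (k : ℂ) * (Real.pi : ℂ) / p)) /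
          Complex.sin ((x : ℂ) + (k : ℂ) * (Real.pi : ℂ) / p)) ^ 2
        = ∑ j ∈ range p, ∑ l ∈ range p,
            Complex.exp (2 * (x : ℂ) * I) ^ ((j : ℤ) + l - p + 1) *
              (ζ ^ ((j : ℤ) + l - p + 1)) ^ k := by
      intro k hk
      have hsz : Complex.sin ((x : ℂ) + (k : ℂ) * (Real.pi : ℂ) / p) ≠ 0 := by
        have h0 := hx k hk
        have : ((x : ℂ) + (k : ℂ) * (Real.pi : ℂ) / p) = ((x + k * Real.pi / p : ℝ) : ℂ) := by
          push_cast; ring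
        rw [this, ← Complex.ofReal_sin]
        exact_mod_cast h0
      rw [ratio_sq p hp0 _ hsz]
      refine Finset.sum_congr rfl fun j hj => Finset.sum_congr rfl fun l hl => ?_
      have hexp : Complex.exp (2 * ((x : ℂ) + (k : ℂ) * (Real.pi : ℂ) / p) * I)
          = Complex.exp (2 * (x : ℂ) * I) * ζ ^ k := by
        rw [hζ_def, ← Complex.exp_nat_mul, ← Complex.exp_add]
        congr 1
        field_simp
      have hζ0 : ζ ≠ 0 := Complex.exp_ne_zero _
      have he0 : Complex.exp (2 * (x : ℂ) * I) ≠ 0 := Complex.exp_ne_zero _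
      rw [hexp, mul_zpow]
      congr 1
      rw [← zpow_natCast ζ k, ← zpow_mul, mul_comm, zpow_mul, zpow_natCast]
    rw [Finset.sum_congr rfl hstep]
    rw [Finset.sum_comm]
    have hswap : ∀ j ∈ range p,
        ∑ k ∈ range p, ∑ l ∈ range p,
            Complex.exp (2 * (x : ℂ) * I) ^ ((j : ℤ) + l - p + 1) *
              (ζ ^ ((j : ℤ) + l - p + 1)) ^ k
        = ∑ l ∈ range p, ∑ k ∈ range p,
            Complex.exp (2 * (x : ℂ) * I) ^ ((j : ℤ) + l - p + 1) *
              (ζ ^ ((j : ℤ) + l - p + 1)) ^ k := fun j _ => Finset.sum_comm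
    rw [Finset.sum_congr rfl hswap]
    have hinner : ∀ j ∈ range p, ∀ l ∈ range p,
        ∑ k ∈ range p, Complex.exp (2 * (x : ℂ) * I) ^ ((j : ℤ) + l - p + 1) *
            (ζ ^ ((j : ℤ) + l - p + 1)) ^ k
        = if l = p - 1 - j then (p : ℂ) else 0 := by
      intro j hj l hl
      simp only [Finset.mem_range] at hj hl
      rw [← Finset.mul_sum]
      set m : ℤ := (j : ℤ) + l - p + 1 with hm_def
      by_cases hm : m = 0
      · have hl' : l = p - 1 - j := by omega
        simp [hm, hl']
      · have hl' : ¬ (l = p - 1 - j) := by omega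
        have hv1 : ζ ^ m ≠ 1 := by
          intro hv
          rw [hζ_def, ← Complex.exp_int_mul, Complex.exp_eq_one_iff] at hv
          obtain ⟨n, hn⟩ := hv
          field_simp [hpR] at hn
          have hmn : (m : ℂ) = n * p := by
            apply mul_right_cancel₀ hπ
            linear_combination (2 * (Real.pi : ℂ) * I) * hn
          have : m = n * p := by exact_mod_cast hmn
          have hmb : -(p:ℤ) < m ∧ m < p := by omega
          rcases lt_trichotomy n 0 with h | h | h
          · nlinarith [hmb.1, hmb.2, Int.le_of_lt_add_one (by omega : n < 0 + 1)]
          · simp [h] at this; exact hm this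
          · nlinarith [hmb.1, hmb.2]
        have hvp : (ζ ^ m) ^ p = 1 := by
          rw [← zpow_natCast (ζ ^ m), ← zpow_mul, hζ_def, ← Complex.exp_int_mul]
          have : ((m * p : ℤ) : ℂ) * (2 * (Real.pi : ℂ) * I / p) = (m : ℂ) * (2 * Real.pi * I) := by
            push_cast
            field_simp
          rw [this]
          exact_mod_cast Complex.exp_int_mul_two_pi_mul_I m
        rw [geom_sum_eq hv1, hvp]
        simp [hl']
    have hcolsum : ∀ j ∈ range p,
        ∑ l ∈ range p, ∑ k ∈ range p,
            Complex.exp (2 * (x : ℂ) * I) ^ ((j : ℤ) + l - p + 1) *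
              (ζ ^ ((j : ℤ) + l - p + 1)) ^ k = (p : ℂ) := by
      intro j hj
      rw [Finset.sum_congr rfl (hinner j hj)]
      rw [Finset.sum_ite_eq' (range p) (p - 1 - j) (fun _ => (p : ℂ))]
      simp only [Finset.mem_range] at hj ⊢
      rw [if_pos (by omega)]
    rw [Finset.sum_congr rfl hcolsum, Finset.sum_const, Finset.card_range]
    push_cast
    ring
  -- transfer to ℝ
  apply Complex.ofReal_injective
  push_cast [Complex.ofReal_sin]
  rw [← hmain]

theorem stmt_17 (p : ℕ) (hp : Odd p) (hp0 : 0 < p) :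
    (∀ t : ℝ, ∑ k ∈ Finset.range p, hphi p (t + 2 * Real.pi * k / p) = 1) ∧
    (∀ t : ℝ, (∀ k ∈ Finset.range p, Real.sin ((t + 2 * Real.pi * k / p) / 2) ≠ 0) →
      ((p : ℝ) ^ 2)⁻¹ * ∑ k ∈ Finset.range p,
          Real.sin (p * t / 2) ^ 2 / Real.sin ((t + 2 * Real.pi * k / p) / 2) ^ 2 = 1) := by
  have hpne : (p : ℝ) ≠ 0 := Nat.cast_ne_zero.mpr hp0.ne'
  have hp2ne : (p : ℝ) ^ 2 ≠ 0 := pow_ne_zero _ hpne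
  have hy : ∀ t : ℝ, ∀ k : ℕ, (t + 2 * Real.pi * k / p) / 2 = t / 2 + k * Real.pi / p := by
    intro t k; ring
  have hnum : ∀ t : ℝ, ∀ k : ℕ,
      (p : ℝ) * (t + 2 * Real.pi * k / p) / 2 = p * (t / 2 + k * Real.pi / p) := by
    intro t k; field_simp
  constructor
  · intro t
    by_cases hsing : ∀ k ∈ Finset.range p, Real.sin (t / 2 + k * Real.pi / p) ≠ 0
    · have hk := key p hp0 (t / 2) hsing
      have hterm : ∀ k ∈ Finset.range p, hphi p (t + 2 * Real.pi * k / p)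
          = (Real.sin (p * (t / 2 + k * Real.pi / p)) /
              Real.sin (t / 2 + k * Real.pi / p)) ^ 2 / (p : ℝ) ^ 2 := by
        intro k hk'
        rw [hphi, hy t k, if_neg (hsing k hk'), hnum t k, div_pow]
        ring
      rw [Finset.sum_congr rfl hterm, ← Finset.sum_div, hk]
      field_simp
    · push_neg at hsing
      obtain ⟨k0, hk0mem, hk0⟩ := hsing
      obtain ⟨n, hn⟩ := Real.sin_eq_zero_iff.mp hk0
      -- every numerator vanishes
      have hnum0 : ∀ k : ℕ, Real.sin ((p : ℝ) * (t + 2 * Real.pi * k / p) / 2) = 0 := by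
        intro k
        have harg : (p : ℝ) * (t + 2 * Real.pi * k / p) / 2
            = ((p * n - k0 + k : ℤ) : ℝ) * Real.pi := by
          have ht2 : (p : ℝ) * (t / 2) = p * n * Real.pi - k0 * Real.pi := by
            have h1 : (n : ℝ) * Real.pi * p = (t / 2) * p + k0 * Real.pi := by
              field_simp at hn
              linear_combination hn / 2
            linear_combination -h1
          have hsplit : (p : ℝ) * (t / 2 + k * Real.pi / p) = p * (t / 2) + k * Real.pi := by
            field_simp
          rw [hnum t k, hsplit]
          push_cast
          linear_combination ht2
        rw [harg]
        exact Real.sin_int_mul_pi _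
      have huniq : ∀ k ∈ Finset.range p, k ≠ k0 →
          hphi p (t + 2 * Real.pi * k / p) = 0 := by
        intro k hkmem hne
        have hsk : Real.sin ((t + 2 * Real.pi * k / p) / 2) ≠ 0 := by
          intro hcontra
          rw [hy t k] at hcontra
          obtain ⟨m', hm'⟩ := Real.sin_eq_zero_iff.mp hcontra
          have hcancel : ((m' : ℝ) - n) * p = (k : ℝ) - k0 := by
            apply mul_right_cancel₀ Real.pi_ne_zero
            have h1 : (n : ℝ) * Real.pi * p = (t / 2) * p + k0 * Real.pi := by
              field_simp at hn; linear_combination hn / 2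
            have h2 : (m' : ℝ) * Real.pi * p = (t / 2) * p + k * Real.pi := by
              field_simp at hm'; linear_combination hm' / 2
            linear_combination h2 - h1
          have hZ : ((m' : ℤ) - n) * p = (k : ℤ) - k0 := by exact_mod_cast hcancel
          simp only [Finset.mem_range] at hkmem hk0mem
          rcases lt_trichotomy (m' - n) 0 with h | h | h
          · nlinarith [hZ, (by exact_mod_cast hkmem : (k : ℤ) < p),
              (by omega : m' - n ≤ -1), (by positivity : (0:ℤ) ≤ (k0 : ℤ))]
          · rw [h] at hZ; omega
          · nlinarith [hZ, (by exact_mod_cast hk0mem : (k0 : ℤ) < p),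
              (by omega : 1 ≤ m' - n), (by positivity : (0:ℤ) ≤ (k : ℤ))]
        rw [hphi, if_neg hsk, hnum0 k]
        simp
      rw [Finset.sum_eq_single_of_mem k0 hk0mem (fun k hk hne => huniq k hk hne)]
      rw [hphi, if_pos]
      rw [hy t k0]
      exact hk0
  · intro t ht
    have hsing : ∀ k ∈ Finset.range p, Real.sin (t / 2 + k * Real.pi / p) ≠ 0 := by
      intro k hk
      have := ht k hk
      rwa [hy t k] at this
    have hk := key p hp0 (t / 2) hsing
    have hterm : ∀ k ∈ Finset.range p,
        Real.sin (p * t / 2) ^ 2 / Real.sin ((t + 2 * Real.pi * k / p) / 2) ^ 2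
        = (Real.sin (p * (t / 2 + k * Real.pi / p)) /
            Real.sin (t / 2 + k * Real.pi / p)) ^ 2 := by
      intro k hk'
      rw [hy t k]
      have harg : (p : ℝ) * (t / 2 + k * Real.pi / p) = p * t / 2 + k * Real.pi := by
        field_simp
      rw [harg, Real.sin_add_nat_mul_pi, div_pow, mul_pow]
      have hsq : ((-1 : ℝ) ^ k) ^ 2 = 1 := by
        rw [← pow_mul, mul_comm, pow_mul, neg_one_sq, one_pow]
      rw [hsq, one_mul]
    rw [Finset.sum_congr rfl hterm, hk]
    field_simp

end
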